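/- For every integer n ≥ 3, the Radon transform is injective on the dihedral group of order 2n (Mathlib's DihedralGroup n). -/

import Mathlib

/-- The Radon transform of `f` at `(x, γ)`: the sum of `f` over the geodesic
determined by the homomorphism `γ : C_n → G`, translated by `x`. -/
noncomputable def radonSum {G : Type*} [Group G] {n : ℕ} [NeZero n]
    (f : G → ℂ) (γ : Multiplicative (ZMod n) →* G) (x : G) : ℂ :=
  ∑ t : ZMod n, f (x * γ (Multiplicative.ofAdd t))

/-- All Radon transforms of `f` (over geodesics of all lengths `n ≥ 2`) vanish. -/
def RadonNull (G : Type*) [Group G] (f : G → ℂ) : Prop :=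
  ∀ (n : ℕ) (hn : 2 ≤ n) (γ : Multiplicative (ZMod n) →* G), γ ≠ 1 → ∀ x : G,
    haveI : NeZero n := ⟨by omega⟩
    radonSum f γ x = 0

/-- The Radon transform is injective on `G`. -/
def RadonInjective (G : Type*) [Group G] : Prop :=
  ∀ f : G → ℂ, RadonNull G f → f = 0

/-- Hom from `C_m` determined by an element `g` with `g ^ m = 1`. -/
def cycHom {G : Type*} [Group G] (m : ℕ) [NeZero m] (g : G) (hg : g ^ m = 1) :
    Multiplicative (ZMod m) →* G where
  toFun t := g ^ (Multiplicative.toAdd t).val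
  map_one' := by simp
  map_mul' a b := by
    simp only [toAdd_mul, ZMod.val_add, ← pow_eq_pow_mod _ hg, pow_add]

lemma zmod2_sum {M : Type*} [AddCommMonoid M] (F : ZMod 2 → M) :
    ∑ t : ZMod 2, F t = F 0 + F 1 := by
  rw [show (Finset.univ : Finset (ZMod 2)) = {0, 1} from by decide]
  simp

lemma zmod2_val_one : (1 : ZMod 2).val = 1 := rfl

open DihedralGroup in
theorem radon_injective_dihedral (n : ℕ) (hn : 3 ≤ n) :
    RadonInjective (DihedralGroup n) := by
  haveI : NeZero n := ⟨by omega⟩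
  intro f hf
  -- reflection relations
  have h2 : ∀ (k : ZMod n) (x : DihedralGroup n), f x + f (x * sr k) = 0 := by
    intro k x
    have hg : (sr k : DihedralGroup n) ^ 2 = 1 := by
      rw [pow_two, sr_mul_sr, sub_self, one_def]
    have hne : cycHom 2 (sr k) hg ≠ 1 := by
      intro h
      have := congrArg (fun φ => φ (Multiplicative.ofAdd (1 : ZMod 2))) h
      simp [cycHom, one_def, MonoidHom.one_apply, zmod2_val_one, -r_zero] at this
    have h0 := hf 2 (by norm_num) _ hne x
    rw [radonSum, zmod2_sum (fun t => f (x * cycHom 2 (sr k) hg (Multiplicative.ofAdd t)))] at h0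
    simpa [cycHom, zmod2_val_one] using h0
  -- f on reflections is the negative of f on any rotation
  have hsr_r : ∀ (i j : ZMod n), f (sr i) = - f (r j) := by
    intro i j
    have h := h2 (j + i) (sr i)
    rw [sr_mul_sr, add_sub_cancel_right] at h
    exact eq_neg_of_add_eq_zero_left h
  -- f is constant on rotations
  have hr_const : ∀ (j : ZMod n), f (r j) = f (r 0) := by
    intro j
    have a := hsr_r 0 j
    have b := hsr_r 0 0
    rw [a] at b
    exact neg_injective b
  -- the rotation homomorphism
  haveI : Fact (1 < n) := ⟨by omega⟩
  have hgr : (r 1 : DihedralGroup n) ^ n = 1 := r_one_pow_n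
  have hne : cycHom n (r 1) hgr ≠ 1 := by
    intro h
    have h' := congrArg (fun φ => φ (Multiplicative.ofAdd (1 : ZMod n))) h
    simp [cycHom, one_def, MonoidHom.one_apply, ZMod.val_one, -r_zero] at h'
  have h0 := hf n (by omega) _ hne 1
  rw [radonSum] at h0
  have hterm : ∀ t : ZMod n, f (1 * cycHom n (r 1) hgr (Multiplicative.ofAdd t)) = f (r 0) := by
    intro t
    simp only [one_mul, cycHom, MonoidHom.coe_mk, OneHom.coe_mk, toAdd_ofAdd,
      r_one_pow, ZMod.natCast_val, ZMod.cast_id]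
    exact hr_const t
  rw [Finset.sum_congr rfl (fun t _ => hterm t), Finset.sum_const, Finset.card_univ, ZMod.card] at h0
  have hn0 : (n : ℂ) ≠ 0 := by exact_mod_cast (by omega : n ≠ 0)
  have hfr0 : f (r 0) = 0 := by
    rw [nsmul_eq_mul] at h0
    exact (mul_eq_zero.mp h0).resolve_left hn0
  funext g
  cases g with
  | r j => rw [hr_const j, hfr0]; rfl
  | sr i => rw [show f (sr i) = - f (r 0) from hsr_r i 0, hfr0]; simp
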